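/- arXiv:0810.3641 — 3 statements merged into one kernel-verified Lean document; each statement's English description precedes it below -/
import Mathlib

section
/- For every k ∈ ℕ and every formal power series f ∈ ℂ[[z]], the Hadamard product (1/(1−z))^{k+1} ⊙ f equals ∑_{j=0}^{k} (C(k,j)/j!) · zʲ · f⁽ʲ⁾(z), i.e., the Hadamard multiplication by 1/(1−z)^{k+1} is the diagonal operator ∑_{j=0}^{k} (C(k,j)/j!) β((a⁺)ʲaʲ). -/
open PowerSeries Finset

noncomputable def hadamard (f g : PowerSeries ℂ) : PowerSeries ℂ :=
  PowerSeries.mk fun n => (PowerSeries.coeff n f) * (PowerSeries.coeff n g)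

lemma inv_one_sub_pow_eq (k : ℕ) :
    (((1 - X : PowerSeries ℂ) ^ (k + 1))⁻¹ : PowerSeries ℂ)
      = PowerSeries.mk fun n => (Nat.choose (k + n) k : ℂ) := by
  symm
  rw [PowerSeries.eq_inv_iff_mul_eq_one]
  · exact PowerSeries.mk_add_choose_mul_one_sub_pow_eq_one (d := k) (S := ℂ)
  · simp

lemma coeff_iterated_deriv (j : ℕ) (f : PowerSeries ℂ) (n : ℕ) :
    PowerSeries.coeff n ((fun g => PowerSeries.derivative ℂ g)^[j] f)
      = (∏ i ∈ range j, ((n + i + 1 : ℕ) : ℂ)) * PowerSeries.coeff (n + j) f := by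
  induction j generalizing f with
  | zero => simp
  | succ j ih =>
      rw [Function.iterate_succ_apply, ih, prod_range_succ, PowerSeries.coeff_derivative,
        mul_comm (PowerSeries.coeff (n + j + 1) f), ← mul_assoc]
      norm_num
      left
      rw [Nat.add_assoc]

lemma prod_fact (m j : ℕ) :
    (∏ i ∈ range j, (m + i + 1)) * m.factorial = (m + j).factorial := by
  induction j with
  | zero => simp
  | succ j ih =>
      rw [prod_range_succ, mul_right_comm, ih, ← Nat.add_assoc, Nat.factorial_succ,
        mul_comm]

lemma prod_eq_choose_mul_fact {j n : ℕ} (h : j ≤ n) :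
    (∏ i ∈ range j, (n - j + i + 1)) = n.choose j * j.factorial := by
  have h1 := prod_fact (n - j) j
  rw [Nat.sub_add_cancel h] at h1
  have h2 := Nat.choose_mul_factorial_mul_factorial h
  have hpos := Nat.factorial_pos (n - j)
  nlinarith [h1, h2]

lemma vandermonde (n k : ℕ) :
    (n + k).choose k = ∑ j ∈ range (k + 1), k.choose j * n.choose j := by
  rw [Nat.add_choose_eq, Finset.Nat.sum_antidiagonal_eq_sum_range_succ_mk]
  refine Finset.sum_congr rfl fun i hi => ?_
  rw [Finset.mem_range] at hi
  simp only [Nat.choose_symm (Nat.lt_succ_iff.mp hi)]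
  ring

theorem hadamard_geom_pow_eq_diagonal (k : ℕ) (f : PowerSeries ℂ) :
    hadamard (((1 - X : PowerSeries ℂ) ^ (k + 1))⁻¹) f
      = ∑ j ∈ range (k + 1),
          PowerSeries.C ((k.choose j : ℂ) / (j.factorial : ℂ)) *
            ((X : PowerSeries ℂ) ^ j * (fun g => PowerSeries.derivative ℂ g)^[j] f) := by
  ext n
  rw [hadamard, PowerSeries.coeff_mk, inv_one_sub_pow_eq, PowerSeries.coeff_mk,
    map_sum]
  have key : ∀ j ∈ range (k + 1),
      PowerSeries.coeff n (PowerSeries.C ((k.choose j : ℂ) / (j.factorial : ℂ)) *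
        ((X : PowerSeries ℂ) ^ j * (fun g => PowerSeries.derivative ℂ g)^[j] f))
      = (k.choose j : ℂ) * (n.choose j : ℂ) * PowerSeries.coeff n f := by
    intro j _
    rw [PowerSeries.coeff_C_mul, PowerSeries.coeff_X_pow_mul']
    by_cases h : j ≤ n
    · rw [if_pos h, coeff_iterated_deriv, Nat.sub_add_cancel h]
      have : (∏ i ∈ range j, ((n - j + i + 1 : ℕ) : ℂ))
          = ((n.choose j * j.factorial : ℕ) : ℂ) := by
        rw [← prod_eq_choose_mul_fact h]
        push_cast
        rfl
      rw [this]
      have hj : (j.factorial : ℂ) ≠ 0 := by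
        exact_mod_cast (Nat.factorial_pos j).ne'
      push_cast
      field_simp
    · rw [if_neg h, mul_zero]
      have : n.choose j = 0 := Nat.choose_eq_zero_of_lt (not_le.mp h)
      rw [this]
      simp
  rw [Finset.sum_congr rfl key, ← Finset.sum_mul]
  congr 1
  have : ((k + n).choose k : ℂ) = ((n + k).choose k : ℂ) := by rw [Nat.add_comm]
  rw [this]
  rw [vandermonde n k]
  push_cast
  rfl
end

section
/- For α, β ∈ ℂ and k, l ∈ ℕ, the Hadamard product 1/(1−αz)^{k+1} ⊙ 1/(1−βz)^{l+1} equals the substitution z ↦ αβz applied to ∑_{j=0}^{k} (C(k,j)/j!) · (l+1)(l+2)⋯(l+j) · zʲ/(1−z)^{l+j+1}. In particular, this Hadamard product is again a rational power series. -/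
open PowerSeries Finset

lemma aux_choose (n l j : ℕ) :
    (l + j).choose j * (n + l).choose (l + j) = (n + l).choose l * n.choose j := by
  rcases le_or_gt j n with h | h
  · have h1 := Nat.choose_mul_factorial_mul_factorial (Nat.le_add_left j l)
    have h2 := Nat.choose_mul_factorial_mul_factorial (show l + j ≤ n + l by omega)
    have h3 := Nat.choose_mul_factorial_mul_factorial (Nat.le_add_left l n)
    have h4 := Nat.choose_mul_factorial_mul_factorial h
    rw [Nat.add_sub_cancel] at h1
    rw [show n + l - (l + j) = n - j by omega] at h2
    rw [Nat.add_sub_cancel] at h3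
    apply Nat.eq_of_mul_eq_mul_right (show 0 < (j.factorial * l.factorial * (n-j).factorial) from
      by positivity)
    zify at h1 h2 h3 h4 ⊢
    linear_combination (((n+l).choose (l+j) : ℤ) * (n-j).factorial) * h1 + h2 - h3
      - (((n+l).choose l : ℤ) * l.factorial) * h4
  · rw [Nat.choose_eq_zero_of_lt (show n + l < l + j by omega),
      Nat.choose_eq_zero_of_lt h, mul_zero, mul_zero]

lemma aux_vandermonde (k n : ℕ) :
    ∑ j ∈ range (k + 1), k.choose j * n.choose j = (n + k).choose k := by
  rw [Nat.add_choose_eq, Finset.Nat.sum_antidiagonal_eq_sum_range_succ_mk]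
  refine Finset.sum_congr rfl fun j hj => ?_
  have hj' : j ≤ k := Nat.lt_succ_iff.mp (Finset.mem_range.mp hj)
  rw [Nat.choose_symm hj']
  ring

lemma aux_main (n k l : ℕ) :
    ∑ j ∈ range (k + 1), k.choose j * ((l + j).choose j * (n + l).choose (l + j))
      = (n + k).choose k * (n + l).choose l := by
  calc ∑ j ∈ range (k + 1), k.choose j * ((l + j).choose j * (n + l).choose (l + j))
      = ∑ j ∈ range (k + 1), (n + l).choose l * (k.choose j * n.choose j) := by
        refine Finset.sum_congr rfl fun j _ => ?_; rw [aux_choose]; ring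
    _ = (n + l).choose l * ∑ j ∈ range (k + 1), k.choose j * n.choose j := by
        rw [Finset.mul_sum]
    _ = (n + k).choose k * (n + l).choose l := by rw [aux_vandermonde]; ring

lemma inv_one_sub_X_pow (m : ℕ) :
    ((1 - X : PowerSeries ℂ) ^ (m + 1))⁻¹ = PowerSeries.mk fun n => ((m + n).choose m : ℂ) := by
  rw [eq_comm, PowerSeries.eq_inv_iff_mul_eq_one]
  · rw [← PowerSeries.invOneSubPow_val_succ_eq_mk_add_choose,
      ← PowerSeries.invOneSubPow_inv_eq_one_sub_pow, mul_comm]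
    exact (PowerSeries.invOneSubPow ℂ (m+1)).inv_val
  · simp

lemma rescale_one_sub_pow (α : ℂ) (m : ℕ) :
    PowerSeries.rescale α ((1 - X : PowerSeries ℂ) ^ m) = (1 - PowerSeries.C α * X) ^ m := by
  rw [map_pow, map_sub, map_one, rescale_X]

lemma inv_one_sub_CX_pow (α : ℂ) (m : ℕ) :
    ((1 - PowerSeries.C α * X) ^ (m + 1))⁻¹
      = PowerSeries.mk fun n => ((m + n).choose m : ℂ) * α ^ n := by
  rw [eq_comm, PowerSeries.eq_inv_iff_mul_eq_one]
  · have : (PowerSeries.mk fun n => ((m + n).choose m : ℂ) * α ^ n)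
        = PowerSeries.rescale α (PowerSeries.mk fun n => ((m + n).choose m : ℂ)) := by
      ext n; simp [PowerSeries.coeff_rescale, mul_comm]
    rw [this, ← rescale_one_sub_pow α, ← map_mul, ← inv_one_sub_X_pow,
      PowerSeries.inv_mul_cancel, map_one]
    simp
  · simp [map_pow]

theorem hadamard_rational_table (α β : ℂ) (k l : ℕ) :
    hadamard (((1 - PowerSeries.C α * X) ^ (k + 1))⁻¹)
        (((1 - PowerSeries.C β * X) ^ (l + 1))⁻¹)
      = PowerSeries.rescale (α * β)
          (∑ j ∈ range (k + 1),
            PowerSeries.C (((k.choose j : ℂ) / (j.factorial : ℂ)) * ((l + 1).ascFactorial j : ℂ)) *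
              ((X : PowerSeries ℂ) ^ j * ((1 - X : PowerSeries ℂ) ^ (l + j + 1))⁻¹)) := by
  ext n
  rw [hadamard, PowerSeries.coeff_mk, inv_one_sub_CX_pow, inv_one_sub_CX_pow,
    PowerSeries.coeff_mk, PowerSeries.coeff_mk, PowerSeries.coeff_rescale, map_sum]
  have hterm : ∀ j ∈ range (k + 1),
      (PowerSeries.coeff n)
        (PowerSeries.C (((k.choose j : ℂ) / (j.factorial : ℂ)) * ((l + 1).ascFactorial j : ℂ)) *
          ((X : PowerSeries ℂ) ^ j * ((1 - X : PowerSeries ℂ) ^ (l + j + 1))⁻¹))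
      = ((k.choose j : ℂ) * ((l + j).choose j : ℂ) * ((n + l).choose (l + j) : ℂ)) := by
    intro j _
    rw [PowerSeries.coeff_C_mul, inv_one_sub_X_pow (l + j), PowerSeries.coeff_X_pow_mul',
      PowerSeries.coeff_mk, Nat.ascFactorial_eq_factorial_mul_choose]
    split_ifs with hjn
    · rw [show l + j + (n - j) = n + l by omega]
      have hj : (j.factorial : ℂ) ≠ 0 := Nat.cast_ne_zero.mpr j.factorial_ne_zero
      push_cast
      field_simp
    · rw [Nat.choose_eq_zero_of_lt (show n + l < l + j by omega)]
      push_cast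
      ring
  rw [Finset.sum_congr rfl hterm]
  have key : ∑ j ∈ range (k + 1),
      ((k.choose j : ℂ) * ((l + j).choose j : ℂ) * ((n + l).choose (l + j) : ℂ))
      = ((n + k).choose k : ℂ) * ((n + l).choose l : ℂ) := by
    have h := congrArg (Nat.cast : ℕ → ℂ) (aux_main n k l)
    push_cast at h
    rw [← h]
    exact Finset.sum_congr rfl fun j _ => by ring
  rw [key, show n + k = k + n from by ring, show n + l = l + n from by ring]
  ring
end

section
/- The Hadamard product of two rational power series in ℂ[[z]] is rational: if f = P₁/Q₁ and g = P₂/Q₂ with P_i, Q_i ∈ ℂ[z] and Q_i(0) ≠ 0, then f ⊙ g is also of the form P/Q with P, Q ∈ ℂ[z] and Q(0) ≠ 0. -/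
open PowerSeries

/-- A power series is rational if it equals `P/Q` for polynomials `P, Q` with `Q(0) ≠ 0`. -/
def IsRationalPS (f : PowerSeries ℂ) : Prop :=
  ∃ P Q : Polynomial ℂ, Q.coeff 0 ≠ 0 ∧ f * (Q : PowerSeries ℂ) = (P : PowerSeries ℂ)

open Filter
noncomputable section
abbrev G := Filter.Germ (Filter.atTop : Filter ℕ) ℂ

instance : Algebra ℂ G where
  algebraMap := (Germ.coeRingHom _).comp (algebraMap ℂ (ℕ → ℂ))
  commutes' := fun c x => mul_comm _ x
  smul_def' := fun c x => by
    induction x using Germ.inductionOn with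
    | _ f => rfl

def sh : G →ₗ[ℂ] G where
  toFun x := x.compTendsto (fun n => n + 1) (tendsto_add_atTop_nat 1)
  map_add' x y := by
    induction x using Germ.inductionOn with
    | _ f => induction y using Germ.inductionOn with
      | _ g => rfl
  map_smul' c x := by
    induction x using Germ.inductionOn with
    | _ f => rfl

@[simp] lemma sh_coe (a : ℕ → ℂ) : sh (↑a : G) = ↑(fun n => a (n+1)) := rfl

lemma sh_mul (x y : G) : sh (x * y) = sh x * sh y := by
  induction x using Germ.inductionOn with
  | _ f => induction y using Germ.inductionOn with
    | _ g => rfl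

lemma shpow_coe (k : ℕ) (a : ℕ → ℂ) : (sh ^ k) (↑a : G) = ↑(fun n => a (n+k)) := by
  induction k generalizing a with
  | zero => simp
  | succ k ih =>
    rw [pow_succ, Module.End.mul_apply, sh_coe, ih]
    simp only [Nat.add_assoc]

end
section
open Pointwise
noncomputable def LinRecG (A : G) : Prop :=
  ∃ d : ℕ, ∃ c : ℕ → ℂ, c d ≠ 0 ∧ ∑ j ∈ Finset.range (d+1), c j • (sh ^ j) A = 0

lemma shpow_mul2 (k : ℕ) (x y : G) : (sh ^ k) (x * y) = (sh ^ k) x * (sh ^ k) y := by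
  induction k with
  | zero => simp
  | succ k ih =>
    rw [pow_succ', Module.End.mul_apply, Module.End.mul_apply, Module.End.mul_apply, ih, sh_mul]

lemma span_claim {A : G} {d : ℕ} {c : ℕ → ℂ} (hc : c d ≠ 0)
    (hrel : ∑ j ∈ Finset.range (d+1), c j • (sh ^ j) A = 0) :
    ∀ k, (sh ^ k) A ∈ Submodule.span ℂ ((fun j => (sh ^ j) A) '' (Set.Iio d)) := by
  set V := Submodule.span ℂ ((fun j => (sh ^ j) A) '' (Set.Iio d)) with hV
  intro k
  induction k using Nat.strong_induction_on with
  | _ k ih =>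
    rcases lt_or_ge k d with hk | hk
    · exact Submodule.subset_span ⟨k, hk, rfl⟩
    · have h1 : c d • (sh ^ d) A = - ∑ j ∈ Finset.range d, c j • (sh ^ j) A := by
        rw [Finset.sum_range_succ] at hrel
        exact eq_neg_of_add_eq_zero_right hrel
      have h2 : c d • (sh ^ k) A = - ∑ j ∈ Finset.range d, c j • (sh ^ (k - d + j)) A := by
        have hkd : (sh ^ k) A = (sh ^ (k - d)) ((sh ^ d) A) := by
          rw [← Module.End.mul_apply, ← pow_add]
          congr 2
          omega
        rw [hkd, ← map_smul, h1, map_neg, map_sum]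
        congr 1
        refine Finset.sum_congr rfl fun j hj => ?_
        rw [map_smul, ← Module.End.mul_apply, ← pow_add]
      have h3 : c d • (sh ^ k) A ∈ V := by
        rw [h2]
        exact Submodule.neg_mem _ (Submodule.sum_mem _ fun j hj =>
          Submodule.smul_mem _ _ (ih (k - d + j) (by simp only [Finset.mem_range] at hj; omega)))
      have h4 := Submodule.smul_mem V (c d)⁻¹ h3
      rwa [inv_smul_smul₀ hc] at h4

lemma linRecG_mul {A B : G} (hA : LinRecG A) (hB : LinRecG B) : LinRecG (A * B) := by
  classical
  obtain ⟨da, ca, hca, hra⟩ := hA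
  obtain ⟨db, cb, hcb, hrb⟩ := hB
  have hAk := span_claim hca hra
  have hBk := span_claim hcb hrb
  set sA : Set G := (fun j => (sh ^ j) A) '' (Set.Iio da) with hsA
  set sB : Set G := (fun j => (sh ^ j) B) '' (Set.Iio db) with hsB
  set s : Set G := sA * sB with hs
  have hsfin : s.Finite :=
    Set.Finite.mul ((Set.finite_Iio da).image _) ((Set.finite_Iio db).image _)
  set W := Submodule.span ℂ s with hW
  have hmem : ∀ k, (sh ^ k) (A * B) ∈ W := by
    intro k
    rw [shpow_mul2]
    have h1 : (sh ^ k) A * (sh ^ k) B ∈ Submodule.span ℂ sA * Submodule.span ℂ sB :=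
      Submodule.mul_mem_mul (hAk k) (hBk k)
    rwa [Submodule.span_mul_span] at h1
  have hfin : FiniteDimensional ℂ W := FiniteDimensional.span_of_finite ℂ hsfin
  set m := hsfin.toFinset.card with hm
  have hrank : Module.finrank ℂ W ≤ m := by
    have : W = Submodule.span ℂ (hsfin.toFinset : Set G) := by rw [Set.Finite.coe_toFinset]
    rw [this]
    exact finrank_span_finset_le_card _
  have hnli : ¬ LinearIndependent ℂ (fun k : Fin (m+1) => (⟨(sh ^ (k:ℕ)) (A*B), hmem k⟩ : W)) := by
    intro h
    have := h.fintype_card_le_finrank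
    simp only [Fintype.card_fin] at this
    omega
  rw [Fintype.not_linearIndependent_iff] at hnli
  obtain ⟨g, hg, i0, hi0⟩ := hnli
  have hg' : ∑ i : Fin (m+1), g i • (sh ^ (i:ℕ)) (A*B) = 0 := by
    have := congrArg (Submodule.subtype W) hg
    simpa using this
  set t := Finset.univ.filter (fun i : Fin (m+1) => g i ≠ 0) with ht
  have hne : t.Nonempty := ⟨i0, by simp [ht, hi0]⟩
  set k := t.max' hne with hk
  refine ⟨(k:ℕ), (fun j => if h : j < m+1 then g ⟨j,h⟩ else 0), ?_, ?_⟩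
  · have hkt : g k ≠ 0 := by
      have := t.max'_mem hne
      simpa [ht] using this
    simpa [k.isLt] using hkt
  · have hsub : Finset.range ((k:ℕ)+1) ⊆ Finset.range (m+1) := by
      apply Finset.range_subset_range.2
      have := k.isLt
      omega
    have hzero : ∀ j ∈ Finset.range (m+1), j ∉ Finset.range ((k:ℕ)+1) →
        (if h : j < m+1 then g ⟨j,h⟩ else 0) • (sh ^ j) (A*B) = 0 := by
      intro j hj hj'
      simp only [Finset.mem_range] at hj hj'
      have hjlt : j < m+1 := hj
      rw [dif_pos hjlt]
      have : g ⟨j, hjlt⟩ = 0 := by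
        by_contra hgj
        have hmem' : (⟨j, hjlt⟩ : Fin (m+1)) ∈ t := by simp [ht, hgj]
        have := t.le_max' _ hmem'
        rw [← hk] at this
        have : j ≤ (k:ℕ) := this
        omega
      rw [this, zero_smul]
    have hfin_eq : ∑ j ∈ Finset.range (m+1),
        (if h : j < m+1 then g ⟨j,h⟩ else 0) • (sh ^ j) (A*B) = 0 := by
      rw [Finset.sum_range fun j => (if h : j < m+1 then g ⟨j,h⟩ else 0) • (sh ^ j) (A*B)]
      rw [← hg']
      refine Finset.sum_congr rfl fun i _ => ?_
      rw [dif_pos i.isLt]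
    exact (Finset.sum_subset hsub hzero).trans hfin_eq
end

noncomputable def LinRecSeq (a : ℕ → ℂ) : Prop :=
  ∃ d : ℕ, ∃ c : ℕ → ℂ, ∃ N : ℕ, c d ≠ 0 ∧
    ∀ n, N ≤ n → ∑ j ∈ Finset.range (d+1), c j * a (n+j) = 0

lemma sum_shift_coe (a : ℕ → ℂ) (d : ℕ) (c : ℕ → ℂ) :
    ∑ j ∈ Finset.range (d+1), c j • (sh ^ j) (↑a : G)
      = ↑(fun n => ∑ j ∈ Finset.range (d+1), c j * a (n+j)) := by
  have h : ∀ j ∈ Finset.range (d+1),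
      c j • (sh ^ j) (↑a : G) = ↑(fun n => c j * a (n+j)) := by
    intro j _
    rw [shpow_coe]
    rfl
  rw [Finset.sum_congr rfl h]
  have h2 : (↑(fun n => ∑ j ∈ Finset.range (d+1), c j * a (n+j)) : G)
      = ↑(∑ j ∈ Finset.range (d+1), fun n => c j * a (n+j)) := by
    congr 1
    funext n
    simp
  rw [h2]
  exact (map_sum (Germ.coeRingHom (atTop : Filter ℕ))
    (fun j => (fun n => c j * a (n+j))) (Finset.range (d+1))).symm

lemma linRecG_iff_seq (a : ℕ → ℂ) : LinRecG (↑a : G) ↔ LinRecSeq a := by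
  constructor
  · rintro ⟨d, c, hc, hrel⟩
    rw [sum_shift_coe] at hrel
    have h0 : ((fun n => ∑ j ∈ Finset.range (d+1), c j * a (n+j)) : ℕ → ℂ)
        =ᶠ[atTop] (fun _ => 0) := by
      rw [← Germ.coe_eq]
      exact hrel
    have h0' : ∀ᶠ n in atTop, (∑ j ∈ Finset.range (d+1), c j * a (n+j)) = 0 := h0
    obtain ⟨N, hN⟩ := eventually_atTop.1 h0'
    exact ⟨d, c, N, hc, hN⟩
  · rintro ⟨d, c, N, hc, hN⟩
    refine ⟨d, c, hc, ?_⟩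
    rw [sum_shift_coe]
    have h1 : ∀ᶠ n in atTop, (∑ j ∈ Finset.range (d+1), c j * a (n+j)) = 0 :=
      eventually_atTop.2 ⟨N, hN⟩
    exact (Germ.coe_eq).2 h1


open Filter
lemma isRat_to_linrec {f : PowerSeries ℂ} (hf : IsRationalPS f) :
    LinRecSeq (fun n => PowerSeries.coeff n f) := by
  obtain ⟨P, Q, hQ0, hPQ⟩ := hf
  set a : ℕ → ℂ := fun n => PowerSeries.coeff n f with ha
  set d := Q.natDegree with hd
  refine ⟨d, fun j => Q.coeff (d - j), P.natDegree + 1, by simpa using hQ0, ?_⟩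
  intro n hn
  have h1 : PowerSeries.coeff (n + d) (f * (Q : PowerSeries ℂ)) = 0 := by
    rw [hPQ, Polynomial.coeff_coe]
    exact Polynomial.coeff_eq_zero_of_natDegree_lt (by omega)
  rw [mul_comm, PowerSeries.coeff_mul,
    Finset.Nat.sum_antidiagonal_eq_sum_range_succ_mk] at h1
  have h2 : ∑ k ∈ Finset.range (n + d + 1),
      (PowerSeries.coeff k (Q : PowerSeries ℂ)) * a (n + d - k)
      = ∑ k ∈ Finset.range (d + 1),
      (PowerSeries.coeff k (Q : PowerSeries ℂ)) * a (n + d - k) := by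
    symm
    apply Finset.sum_subset (Finset.range_subset_range.2 (by omega))
    intro k hk hk'
    simp only [Finset.mem_range] at hk hk'
    rw [Polynomial.coeff_coe, Polynomial.coeff_eq_zero_of_natDegree_lt (by omega), zero_mul]
  rw [h2] at h1
  rw [← h1]
  rw [← Finset.sum_range_reflect (fun k => (PowerSeries.coeff k (Q : PowerSeries ℂ)) * a (n + d - k)) (d+1)]
  refine Finset.sum_congr rfl fun j hj => ?_
  simp only [Finset.mem_range] at hj
  rw [Polynomial.coeff_coe]
  congr 2
  omega

lemma linrec_to_isRat {f : PowerSeries ℂ}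
    (h : LinRecSeq (fun n => PowerSeries.coeff n f)) : IsRationalPS f := by
  obtain ⟨d, c, N, hc, hrec⟩ := h
  set a : ℕ → ℂ := fun n => PowerSeries.coeff n f with ha
  set Q : Polynomial ℂ := ∑ j ∈ Finset.range (d+1), Polynomial.monomial j (c (d - j)) with hQdef
  have hQcoeff : ∀ k, Q.coeff k = if k ≤ d then c (d - k) else 0 := by
    intro k
    rw [hQdef, Polynomial.finset_sum_coeff]
    simp only [Polynomial.coeff_monomial]
    rw [Finset.sum_ite_eq' (Finset.range (d+1)) k (fun j => c (d - j))]
    simp [Nat.lt_succ_iff]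
  have hQ0 : Q.coeff 0 ≠ 0 := by
    rw [hQcoeff]
    simpa using hc
  have hvanish : ∀ m, N + d ≤ m → PowerSeries.coeff m (f * (Q : PowerSeries ℂ)) = 0 := by
    intro m hm
    rw [mul_comm, PowerSeries.coeff_mul, Finset.Nat.sum_antidiagonal_eq_sum_range_succ_mk]
    have h2 : ∑ k ∈ Finset.range (m + 1),
        (PowerSeries.coeff k (Q : PowerSeries ℂ)) * a (m - k)
        = ∑ k ∈ Finset.range (d + 1),
        (PowerSeries.coeff k (Q : PowerSeries ℂ)) * a (m - k) := by
      symm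
      apply Finset.sum_subset (Finset.range_subset_range.2 (by omega))
      intro k hk hk'
      simp only [Finset.mem_range] at hk hk'
      rw [Polynomial.coeff_coe, hQcoeff, if_neg (by omega), zero_mul]
    rw [h2, ← Finset.sum_range_reflect
      (fun k => (PowerSeries.coeff k (Q : PowerSeries ℂ)) * a (m - k)) (d+1)]
    have h3 : ∀ j ∈ Finset.range (d+1),
        (PowerSeries.coeff (d + 1 - 1 - j) (Q : PowerSeries ℂ)) * a (m - (d + 1 - 1 - j))
        = c j * a ((m - d) + j) := by
      intro j hj
      simp only [Finset.mem_range] at hj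
      rw [Polynomial.coeff_coe, hQcoeff, if_pos (by omega)]
      congr 2
      · omega
      · omega
    rw [Finset.sum_congr rfl h3]
    exact hrec (m - d) (by omega)
  refine ⟨PowerSeries.trunc (N + d) (f * (Q : PowerSeries ℂ)), Q, hQ0, ?_⟩
  ext n
  rw [Polynomial.coeff_coe, PowerSeries.coeff_trunc]
  split
  · rfl
  · next hn => exact hvanish n (by omega)


theorem hadamard_rational_of_rational (f g : PowerSeries ℂ)
    (hf : IsRationalPS f) (hg : IsRationalPS g) : IsRationalPS (hadamard f g) := by
  have ha := isRat_to_linrec hf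
  have hb := isRat_to_linrec hg
  set a : ℕ → ℂ := fun n => PowerSeries.coeff n f with haa
  set b : ℕ → ℂ := fun n => PowerSeries.coeff n g with hbb
  have hA : LinRecG (↑a : G) := (linRecG_iff_seq a).2 ha
  have hB : LinRecG (↑b : G) := (linRecG_iff_seq b).2 hb
  have hAB : LinRecG ((↑a : G) * ↑b) := linRecG_mul hA hB
  have hco : ((↑a : G) * ↑b) = ↑(fun n => a n * b n) := rfl
  rw [hco] at hAB
  have hseq : LinRecSeq (fun n => a n * b n) := (linRecG_iff_seq _).1 hAB
  apply linrec_to_isRat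
  have hfun : (fun n => PowerSeries.coeff n (hadamard f g)) = fun n => a n * b n := by
    funext n
    simp [hadamard, PowerSeries.coeff_mk]
    rfl
  rw [hfun]
  exact hseq
end
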